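/- If three mutually intersecting closed disks D_i, D_j, D_k in the hyperbolic plane have pairwise exterior intersection angles Θ_i, Θ_j, Θ_k ∈ [0, π) (with Θ_i the angle between D_j and D_k etc.), and D_i ∩ D_j ⊆ D_k, then Θ_i + Θ_j ≥ Θ_k + π. -/

import Mathlib

set_option maxHeartbeats 4000000


open Real Metric

private lemma pos_of_sq' {x : ℝ} (h0 : 0 ≤ x) (h : 0 < x^2) : 0 < x := by
  rcases h0.lt_or_eq with h' | h'
  · exact h'
  · exfalso; rw [← h'] at h; simp at h

private lemma eq_of_sq_eq' {x y : ℝ} (hx : 0 ≤ x) (hy : 0 ≤ y) (h : x^2 = y^2) : x = y := by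
  rw [← Real.sqrt_sq hx, h, Real.sqrt_sq hy]

private lemma abs_sq_eq' (z : ℂ) : ‖z‖^2 = z.re^2 + z.im^2 := by
  rw [Complex.sq_norm, Complex.normSq_apply]; ring

private lemma cdist_sq' (z w : ℂ) : dist z w ^ 2 = (z.re - w.re)^2 + (z.im - w.im)^2 := by
  rw [Complex.dist_eq, Complex.sq_norm, Complex.normSq_apply, Complex.sub_re, Complex.sub_im]
  ring

/-- positivity of squared distance from the cosine law -/
private lemma sqpos_aux {x ρa ρb c : ℝ} (hρa : 0 < ρa) (hρb : 0 < ρb) (hc : -1 < c)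
    (h : x^2 = ρa^2 + ρb^2 + 2*c*ρa*ρb) : 0 < x^2 := by
  nlinarith [mul_pos (show (0:ℝ) < 1+c by linarith) (mul_pos hρa hρb), sq_nonneg (ρa-ρb)]

/-- `ρb < x + ρa` from the cosine law (circles intersect). -/
private lemma lt_add_aux {x ρa ρb c : ℝ} (hρa : 0 < ρa) (hρb : 0 < ρb) (hc : -1 < c)
    (hx : 0 ≤ x) (h : x^2 = ρa^2 + ρb^2 + 2*c*ρa*ρb) : ρb < x + ρa := by
  by_contra hcon
  push_neg at hcon
  have h1 : 0 ≤ ρb - ρa - x := by linarith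
  have h2 : x^2 ≤ (ρb - ρa)^2 := by nlinarith
  nlinarith [mul_pos (show (0:ℝ) < 1+c by linarith) (mul_pos hρa hρb)]

/-- the "sine positivity" scalar lemma -/
private lemma W_scalar (p q a β ρ e r : ℝ) (hρ : 0 < ρ) (he : 0 < e)
    (hq : 0 ≤ q) (hβ : 0 ≤ β)
    (h1 : ρ^2 = p^2 + q^2) (h2 : e^2 = a^2 + β^2)
    (hZl : -(2*ρ*e) ≤ ρ^2 + e^2 - r^2)
    (hF : ρ^2 + e^2 - r^2 ≤ 2*(p*a - q*β))
    (hC : 0 < e*p + ρ*a) :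
    p*(ρ^2 + e^2 - r^2) ≤ 2*ρ^2*a := by
  rcases le_or_gt 0 p with hp | hp
  · have hS : 0 ≤ q*a + p*β := by
      rcases le_or_gt 0 a with ha | ha
      · positivity
      · have h3 : ρ*(-a) < e*p := by linarith
        have h4 : (ρ*(-a))^2 < (e*p)^2 := by
          have h0 : 0 ≤ ρ*(-a) := mul_nonneg hρ.le (by linarith)
          nlinarith
        have h5 : (q*(-a))^2 < (p*β)^2 := by nlinarith
        have h6 : q*(-a) < p*β := by
          have h0 : 0 ≤ q*(-a) := mul_nonneg hq (by linarith)
          nlinarith [sq_nonneg (q*(-a) + p*β)]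
        linarith
    have hM := mul_le_mul_of_nonneg_left hF hp
    have h1a : ρ^2*a = p^2*a + q^2*a := by rw [h1]; ring
    nlinarith [mul_nonneg hq hS]
  · have ha : 0 < a := by nlinarith
    nlinarith [mul_pos (mul_pos hρ he) ha]

/-- core scalar lemma: from the corner and antipode constraints derive the
three cosine inequalities. -/
private lemma core_scalar (d p q a β ρ1 ρ2 ρ3 e f ci cj ck : ℝ)
    (hd0 : 0 < d) (hρ1 : 0 < ρ1) (hρ2 : 0 < ρ2) (hρ3 : 0 < ρ3)
    (he0 : 0 < e) (hf0 : 0 < f)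
    (hq0 : 0 ≤ q) (hβ0 : 0 ≤ β)
    (hρ12 : ρ1^2 = p^2 + q^2) (hρ22 : ρ2^2 = (d-p)^2 + q^2)
    (he2 : e^2 = a^2 + β^2) (hf2 : f^2 = (d-a)^2 + β^2)
    (hq2 : q^2 = ρ1^2 - p^2) (hβ2 : β^2 = e^2 - a^2)
    (hci' : 2*ρ2*ρ3*ci = f^2 - ρ2^2 - ρ3^2)
    (hcj' : 2*ρ1*ρ3*cj = e^2 - ρ1^2 - ρ3^2)
    (hck' : 2*ρ1*ρ2*ck = d^2 - ρ1^2 - ρ2^2)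
    (hjj : ρ3 < e + ρ1) (hii : ρ3 < f + ρ2)
    (C3 : (p-a)^2 + (q+β)^2 ≤ ρ3^2)
    (C4 : 0 < e*p + ρ1*a) (C5 : 0 < f*(d-p) + ρ2*(d-a)) :
    ci + cj*ck ≤ 0 ∧ cj + ci*ck ≤ 0 ∧ 1 ≤ ci^2 + cj^2 + ck^2 + 2*ci*cj*ck := by
  have hZl1 : -(2*ρ1*e) ≤ ρ1^2 + e^2 - ρ3^2 := by
    have h0 : ρ3*ρ3 < (e+ρ1)*(e+ρ1) := mul_self_lt_mul_self hρ3.le hjj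
    linarith only [h0]
  have hZl2 : -(2*ρ2*f) ≤ ρ2^2 + f^2 - ρ3^2 := by
    have h0 : ρ3*ρ3 < (f+ρ2)*(f+ρ2) := mul_self_lt_mul_self hρ3.le hii
    linarith only [h0]
  have hFj : ρ1^2 + e^2 - ρ3^2 ≤ 2*(p*a - q*β) := by
    have hexp : (p-a)^2 + (q+β)^2 = ρ1^2 + e^2 - 2*(p*a - q*β) := by
      rw [hρ12, he2]; ring
    linarith
  have hFi : ρ2^2 + f^2 - ρ3^2 ≤ 2*((d-p)*(d-a) - q*β) := by
    have hexp : (p-a)^2 + (q+β)^2 = ρ2^2 + f^2 - 2*((d-p)*(d-a) - q*β) := by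
      rw [hρ22, hf2]; ring
    linarith
  have W1s := W_scalar p q a β ρ1 e ρ3 hρ1 he0 hq0 hβ0 hρ12 he2 hZl1 hFj C4
  have W2s := W_scalar (d-p) q (d-a) β ρ2 f ρ3 hρ2 hf0 hq0 hβ0 hρ22 hf2 hZl2 hFi C5
  have hnum1 : 2*ρ1^2*(f^2 - ρ2^2 - ρ3^2) + (e^2 - ρ1^2 - ρ3^2)*(d^2 - ρ1^2 - ρ2^2)
      = 2*d*(p*(ρ1^2 + e^2 - ρ3^2) - 2*ρ1^2*a) := by
    rw [hf2, hρ22, hβ2, hq2]; ring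
  have hnum2 : 2*ρ2^2*(e^2 - ρ1^2 - ρ3^2) + (f^2 - ρ2^2 - ρ3^2)*(d^2 - ρ1^2 - ρ2^2)
      = 2*d*((d-p)*(ρ2^2 + f^2 - ρ3^2) - 2*ρ2^2*(d-a)) := by
    rw [hf2, hρ22, hβ2, hq2]; ring
  have hnumGB : ρ1^2*(f^2 - ρ2^2 - ρ3^2)^2 + ρ2^2*(e^2 - ρ1^2 - ρ3^2)^2
      + ρ3^2*(d^2 - ρ1^2 - ρ2^2)^2
      + (f^2 - ρ2^2 - ρ3^2)*(e^2 - ρ1^2 - ρ3^2)*(d^2 - ρ1^2 - ρ2^2)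
      - 4*ρ1^2*ρ2^2*ρ3^2
      = d^2*((p-a)^2 + (q-β)^2 - ρ3^2)*((p-a)^2 + (q+β)^2 - ρ3^2) := by
    rw [hf2, hρ22, he2, hρ12]; ring
  constructor
  · -- W1
    have hA : (4*ρ1^2*ρ2*ρ3)*(ci + cj*ck) = 2*d*(p*(ρ1^2 + e^2 - ρ3^2) - 2*ρ1^2*a) := by
      linear_combination 2*ρ1^2*hci' + 2*ρ1*ρ2*ck*hcj' + (e^2 - ρ1^2 - ρ3^2)*hck' + hnum1
    have hle : (4*ρ1^2*ρ2*ρ3)*(ci + cj*ck) ≤ (4*ρ1^2*ρ2*ρ3)*0 := by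
      rw [mul_zero, hA]
      exact mul_nonpos_of_nonneg_of_nonpos (by positivity) (by linarith only [W1s])
    exact (mul_le_mul_iff_right₀ (by positivity)).mp hle
  constructor
  · -- W2
    have hA : (4*ρ1*ρ2^2*ρ3)*(cj + ci*ck) = 2*d*((d-p)*(ρ2^2 + f^2 - ρ3^2) - 2*ρ2^2*(d-a)) := by
      linear_combination 2*ρ2^2*hcj' + 2*ρ1*ρ2*ck*hci' + (f^2 - ρ2^2 - ρ3^2)*hck' + hnum2
    have hle : (4*ρ1*ρ2^2*ρ3)*(cj + ci*ck) ≤ (4*ρ1*ρ2^2*ρ3)*0 := by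
      rw [mul_zero, hA]
      exact mul_nonpos_of_nonneg_of_nonpos (by positivity) (by linarith only [W2s])
    exact (mul_le_mul_iff_right₀ (by positivity)).mp hle
  · -- GB
    have hGBeq : (4*ρ1^2*ρ2^2*ρ3^2)*(ci^2 + cj^2 + ck^2 + 2*ci*cj*ck - 1)
        = d^2*(((p-a)^2 + (q-β)^2 - ρ3^2)*((p-a)^2 + (q+β)^2 - ρ3^2)) := by
      linear_combination (ρ1^2*(2*ρ2*ρ3*ci + (f^2 - ρ2^2 - ρ3^2))
          + (2*ρ1*ρ3*cj)*(2*ρ1*ρ2*ck))*hci'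
        + (ρ2^2*(2*ρ1*ρ3*cj + (e^2 - ρ1^2 - ρ3^2))
          + (f^2 - ρ2^2 - ρ3^2)*(2*ρ1*ρ2*ck))*hcj'
        + (ρ3^2*(2*ρ1*ρ2*ck + (d^2 - ρ1^2 - ρ2^2))
          + (f^2 - ρ2^2 - ρ3^2)*(e^2 - ρ1^2 - ρ3^2))*hck'
        + hnumGB
    have hPm : (p-a)^2 + (q+β)^2 - ρ3^2 ≤ 0 := by linarith only [C3]
    have hPp : (p-a)^2 + (q-β)^2 - ρ3^2 ≤ 0 := by
      have hexp : (p-a)^2 + (q-β)^2 - ρ3^2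
          = ((p-a)^2 + (q+β)^2 - ρ3^2) - 4*(q*β) := by ring
      have h4 : 0 ≤ q*β := mul_nonneg hq0 hβ0
      linarith only [hexp, h4, hPm]
    have hprod : 0 ≤ ((p-a)^2 + (q-β)^2 - ρ3^2)*((p-a)^2 + (q+β)^2 - ρ3^2) := by
      have h0 := mul_nonneg (neg_nonneg.mpr hPp) (neg_nonneg.mpr hPm)
      rwa [neg_mul_neg] at h0
    have hge : (4*ρ1^2*ρ2^2*ρ3^2)*0 ≤ (4*ρ1^2*ρ2^2*ρ3^2)*(ci^2 + cj^2 + ck^2 + 2*ci*cj*ck - 1) := by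
      rw [mul_zero, hGBeq]
      exact mul_nonneg (sq_nonneg d) hprod
    have := (mul_le_mul_iff_right₀ (by positivity : (0:ℝ) < 4*ρ1^2*ρ2^2*ρ3^2)).mp hge
    linarith only [this]

private lemma cos_key' (ci cj ck : ℝ) (hk1 : -1 < ck) (hk2 : ck ≤ 1)
    (W1 : ci + cj*ck ≤ 0) (W2 : cj + ci*ck ≤ 0)
    (GB : 1 ≤ ci^2 + cj^2 + ck^2 + 2*ci*cj*ck) :
    ci + cj ≤ ck - 1 := by
  have hsum : ci + cj ≤ 0 := by nlinarith
  rcases eq_or_lt_of_le hk2 with h1 | h1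
  · nlinarith
  · have h3 : (-ck*cj - ci)*(cj + ck*ci) ≤ 0 :=
      mul_nonpos_of_nonneg_of_nonpos (by linarith) (by linarith)
    have h4 : (1 - ck^2)*(ci+cj)^2 ≥ (1 - ck)^2*(ci^2 + 2*ck*ci*cj + cj^2) := by
      nlinarith [mul_nonpos_of_nonneg_of_nonpos (by linarith : (0:ℝ) ≤ 1 - ck) h3]
    have h5 : ci^2 + 2*ck*ci*cj + cj^2 ≥ 1 - ck^2 := by nlinarith
    have h6 : (1 - ck^2)*(ci+cj)^2 ≥ (1 - ck)^2*(1 - ck^2) := by nlinarith [sq_nonneg (1-ck)]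
    have h7 : (ci+cj)^2 ≥ (1-ck)^2 := by
      have hpos : 0 < 1 - ck^2 := by nlinarith
      nlinarith
    nlinarith

private lemma angle_final' (Θi Θj Θk : ℝ)
    (hΘi : Θi ∈ Set.Ico 0 π) (hΘj : Θj ∈ Set.Ico 0 π) (hΘk : Θk ∈ Set.Ico 0 π)
    (W1 : Real.cos Θi + Real.cos Θj * Real.cos Θk ≤ 0)
    (W2 : Real.cos Θj + Real.cos Θi * Real.cos Θk ≤ 0)
    (GB : 1 ≤ Real.cos Θi^2 + Real.cos Θj^2 + Real.cos Θk^2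
            + 2*Real.cos Θi*Real.cos Θj*Real.cos Θk) :
    Θi + Θj ≥ Θk + π := by
  obtain ⟨hi0, hiπ⟩ := hΘi
  obtain ⟨hj0, hjπ⟩ := hΘj
  obtain ⟨hk0, hkπ⟩ := hΘk
  have hcik : -1 < Real.cos Θi := by
    have := Real.cos_lt_cos_of_nonneg_of_le_pi hi0 le_rfl hiπ
    rwa [Real.cos_pi] at this
  have hckk : -1 < Real.cos Θk := by
    have := Real.cos_lt_cos_of_nonneg_of_le_pi hk0 le_rfl hkπ
    rwa [Real.cos_pi] at this
  have key : Real.cos Θi + Real.cos Θj ≤ Real.cos Θk - 1 :=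
    cos_key' _ _ _ hckk (Real.cos_le_one _) W1 W2 GB
  have hjk : Θk < Θj := by
    by_contra h
    push_neg at h
    have := Real.cos_le_cos_of_nonneg_of_le_pi hj0 (le_of_lt hkπ) h
    linarith
  have hsj : 0 ≤ Real.sin Θj := Real.sin_nonneg_of_nonneg_of_le_pi hj0 (le_of_lt hjπ)
  have hsk : 0 ≤ Real.sin Θk := Real.sin_nonneg_of_nonneg_of_le_pi hk0 (le_of_lt hkπ)
  have e1 : Real.sin Θj ^2 = 1 - Real.cos Θj^2 := Real.sin_sq Θj
  have e2 : Real.sin Θk ^2 = 1 - Real.cos Θk^2 := Real.sin_sq Θk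
  have G1 : Real.cos Θi + Real.cos Θj * Real.cos Θk + Real.sin Θj * Real.sin Θk ≤ 0 := by
    have hsq : (Real.sin Θj * Real.sin Θk)^2 ≤ (Real.cos Θi + Real.cos Θj * Real.cos Θk)^2 := by
      nlinarith
    nlinarith [mul_nonneg hsj hsk]
  by_contra hcon
  push_neg at hcon
  have hd : Θi < π - (Θj - Θk) := by linarith
  have hlt := Real.cos_lt_cos_of_nonneg_of_le_pi hi0 (by linarith : π - (Θj - Θk) ≤ π) hd
  rw [Real.cos_pi_sub, Real.cos_sub] at hlt
  linarith

set_option maxHeartbeats 2000000 in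
/-- Euclidean lemma: three disks in `ℂ` with given pairwise cosine data and
`D1 ∩ D2 ⊆ D3` give the three cosine inequalities. -/
private lemma euclid_main (c1 c2 c3 : ℂ) (ρ1 ρ2 ρ3 ci cj ck : ℝ)
    (hρ1 : 0 < ρ1) (hρ2 : 0 < ρ2) (hρ3 : 0 < ρ3)
    (hci1 : -1 < ci) (hcj1 : -1 < cj) (hck1 : -1 < ck) (hck2 : ck ≤ 1)
    (h12 : dist c1 c2 ^ 2 = ρ1^2 + ρ2^2 + 2*ck*ρ1*ρ2)
    (h13 : dist c1 c3 ^ 2 = ρ1^2 + ρ3^2 + 2*cj*ρ1*ρ3)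
    (h23 : dist c2 c3 ^ 2 = ρ2^2 + ρ3^2 + 2*ci*ρ2*ρ3)
    (hsub : ∀ z : ℂ, dist z c1 ≤ ρ1 → dist z c2 ≤ ρ2 → dist z c3 ≤ ρ3) :
    ci + cj*ck ≤ 0 ∧ cj + ci*ck ≤ 0 ∧ 1 ≤ ci^2 + cj^2 + ck^2 + 2*ci*cj*ck := by
  obtain ⟨d, hd⟩ : ∃ x, x = dist c1 c2 := ⟨_, rfl⟩
  rw [← hd] at h12
  obtain ⟨e, he⟩ : ∃ x, x = dist c1 c3 := ⟨_, rfl⟩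
  rw [← he] at h13
  obtain ⟨f, hf⟩ : ∃ x, x = dist c2 c3 := ⟨_, rfl⟩
  rw [← hf] at h23
  have hd0 : 0 < d := pos_of_sq' (hd ▸ dist_nonneg) (sqpos_aux hρ1 hρ2 hck1 h12)
  have he0 : 0 < e := pos_of_sq' (he ▸ dist_nonneg) (sqpos_aux hρ1 hρ3 hcj1 h13)
  have hf0 : 0 < f := pos_of_sq' (hf ▸ dist_nonneg) (sqpos_aux hρ2 hρ3 hci1 h23)
  have hjj : ρ3 < e + ρ1 := lt_add_aux hρ1 hρ3 hcj1 (he ▸ dist_nonneg) h13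
  have hii : ρ3 < f + ρ2 := lt_add_aux hρ2 hρ3 hci1 (hf ▸ dist_nonneg) h23
  have hc21 : c2 - c1 ≠ 0 := sub_ne_zero.mpr (fun h => by
    rw [h] at hd; simp [dist_self] at hd; rw [hd] at hd0; exact lt_irrefl 0 hd0)
  have hdC : (d:ℂ) ≠ 0 := by exact_mod_cast hd0.ne'
  have habs21 : ‖c2 - c1‖ = d := by rw [← Complex.dist_eq, dist_comm, ← hd]
  have habs31 : ‖c3 - c1‖ = e := by rw [← Complex.dist_eq, dist_comm, ← he]
  have habs32 : ‖c3 - c2‖ = f := by rw [← Complex.dist_eq, dist_comm, ← hf]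
  obtain ⟨w, hw⟩ : ∃ x : ℂ, x = (c2 - c1)/(d:ℂ) := ⟨_, rfl⟩
  obtain ⟨ζ, hζ⟩ : ∃ x : ℂ, x = (c3 - c1) * (starRingEnd ℂ) (c2 - c1) / (d:ℂ) := ⟨_, rfl⟩
  have habsw : ‖w‖ = 1 := by
    rw [hw, norm_div, habs21, Complex.norm_real, Real.norm_eq_abs, abs_of_pos hd0, div_self hd0.ne']
  have hmc : (c2 - c1) * (starRingEnd ℂ) (c2 - c1) = ((d:ℂ))^2 := by
    rw [Complex.mul_conj]; norm_cast; rw [← Complex.sq_norm, habs21]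
  have hwd : w * (d:ℂ) = c2 - c1 := by rw [hw]; field_simp
  have hwζ : w * ζ = c3 - c1 := by
    have h0 : w * ζ = (c3 - c1) * ((c2 - c1) * (starRingEnd ℂ) (c2 - c1)) / ((d:ℂ)^2) := by
      rw [hw, hζ]; ring
    rw [h0, hmc]; field_simp
  have habsζ : ‖ζ‖ = e := by
    have h0 : ‖w * ζ‖ = e := by rw [hwζ, habs31]
    rwa [norm_mul, habsw, one_mul] at h0
  have hζsq : ζ.re^2 + ζ.im^2 = e^2 := by rw [← abs_sq_eq', habsζ]
  have h32 : c3 - c2 = w * (ζ - (d:ℂ)) := by rw [mul_sub, hwζ, hwd]; ring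
  have hf2' : f^2 = (ζ.re - d)^2 + ζ.im^2 := by
    have h1 : ‖ζ - (d:ℂ)‖ = f := by
      have h0 : ‖w * (ζ - (d:ℂ))‖ = f := by rw [← h32, habs32]
      rwa [norm_mul, habsw, one_mul] at h0
    rw [← h1, abs_sq_eq']; simp [Complex.sub_re, Complex.sub_im]
  obtain ⟨a, ha⟩ : ∃ x, x = (d^2 + e^2 - f^2)/(2*d) := ⟨_, rfl⟩
  obtain ⟨p, hp⟩ : ∃ x, x = (d^2 + ρ1^2 - ρ2^2)/(2*d) := ⟨_, rfl⟩
  have ha2 : 2*d*a = d^2 + e^2 - f^2 := by rw [ha]; field_simp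
  have hp2 : 2*d*p = d^2 + ρ1^2 - ρ2^2 := by rw [hp]; field_simp
  have hζre : ζ.re = a := by
    have h2d : 2*d*ζ.re = d^2 + e^2 - f^2 := by linear_combination hf2' + hζsq
    have h0 : (2*d)*ζ.re = (2*d)*a := by linarith
    exact mul_left_cancel₀ (by positivity) h0
  obtain ⟨β, hβ⟩ : ∃ x, x = |ζ.im| := ⟨_, rfl⟩
  have hβ0 : 0 ≤ β := hβ ▸ abs_nonneg _
  have hζim2 : ζ.im^2 = β^2 := by rw [hβ, sq_abs]
  have hβ2 : β^2 = e^2 - a^2 := by rw [← hζim2, ← hζre]; linarith [hζsq]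
  have hq2' : 0 ≤ ρ1^2 - p^2 := by
    have hkey : 4*d^2*(ρ1^2 - p^2) = ((ρ1+ρ2)^2 - d^2)*(d^2 - (ρ1-ρ2)^2) := by
      rw [hp]; field_simp; ring
    have h1 : 0 ≤ (ρ1+ρ2)^2 - d^2 := by
      have h0 : 0 ≤ ρ1*ρ2*(1-ck) :=
        mul_nonneg (mul_nonneg hρ1.le hρ2.le) (by linarith only [hck2])
      linarith only [h12, h0]
    have h2 : 0 ≤ d^2 - (ρ1-ρ2)^2 := by
      have h0 : 0 ≤ ρ1*ρ2*(1+ck) :=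
        mul_nonneg (mul_nonneg hρ1.le hρ2.le) (by linarith only [hck1])
      linarith only [h12, h0]
    have h3 : 0 ≤ 4*d^2*(ρ1^2 - p^2) := hkey ▸ mul_nonneg h1 h2
    by_contra hcon
    push_neg at hcon
    have h4 : 4*d^2*(ρ1^2 - p^2) < 0 :=
      mul_neg_of_pos_of_neg (by positivity) (by linarith)
    linarith
  obtain ⟨q, hqdef⟩ : ∃ x, x = Real.sqrt (ρ1^2 - p^2) := ⟨_, rfl⟩
  have hq0 : 0 ≤ q := hqdef ▸ Real.sqrt_nonneg _
  have hq2 : q^2 = ρ1^2 - p^2 := by rw [hqdef]; exact Real.sq_sqrt hq2'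
  have hρ12 : ρ1^2 = p^2 + q^2 := by rw [hq2]; ring
  have hρ22 : ρ2^2 = (d-p)^2 + q^2 := by linear_combination hp2 - hq2
  have he2c : e^2 = a^2 + β^2 := by rw [hβ2]; ring
  have hf2c : f^2 = (d-a)^2 + β^2 := by linear_combination ha2 - hβ2
  -- the sign choice for the far corner
  obtain ⟨s, hs2, hsim⟩ : ∃ s : ℝ, s^2 = 1 ∧ s * ζ.im = β := by
    rcases le_or_gt 0 ζ.im with h | h
    · exact ⟨1, by norm_num, by rw [hβ, abs_of_nonneg h]; ring⟩
    · exact ⟨-1, by norm_num, by rw [hβ, abs_of_neg h]; ring⟩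
  obtain ⟨μ, hμ⟩ : ∃ x : ℂ, x = (⟨p, -(s*q)⟩ : ℂ) := ⟨_, rfl⟩
  have hμre : μ.re = p := by rw [hμ]
  have hμim : μ.im = -(s*q) := by rw [hμ]
  obtain ⟨x, hx⟩ : ∃ z : ℂ, z = c1 + w*μ := ⟨_, rfl⟩
  have hxc1 : x - c1 = w*μ := by rw [hx]; ring
  have habsμ : ‖μ‖^2 = ρ1^2 := by
    rw [abs_sq_eq', hμre, hμim, hρ12]
    linear_combination q^2*hs2
  have hdx1 : dist x c1 = ρ1 := by
    rw [Complex.dist_eq, hxc1, norm_mul, habsw, one_mul]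
    exact eq_of_sq_eq' (norm_nonneg _) hρ1.le habsμ
  have hxc2 : x - c2 = w*(μ - (d:ℂ)) := by rw [hx, mul_sub, hwd]; ring
  have hdx2 : dist x c2 = ρ2 := by
    rw [Complex.dist_eq, hxc2, norm_mul, habsw, one_mul]
    refine eq_of_sq_eq' (norm_nonneg _) hρ2.le ?_
    rw [abs_sq_eq', Complex.sub_re, Complex.sub_im, hμre, hμim, Complex.ofReal_re,
      Complex.ofReal_im, hρ22]
    linear_combination q^2*hs2
  have hxc3 : x - c3 = w*(μ - ζ) := by rw [hx, mul_sub, hwζ]; ring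
  have hdx3 : dist x c3 ^ 2 = (p-a)^2 + (q+β)^2 := by
    rw [Complex.dist_eq, hxc3, norm_mul, habsw, one_mul, abs_sq_eq',
      Complex.sub_re, Complex.sub_im, hμre, hμim, hζre]
    linear_combination q^2*hs2 + 2*q*hsim + hζim2
  have C3 : (p-a)^2 + (q+β)^2 ≤ ρ3^2 := by
    have h0 : dist x c3 ≤ ρ3 := hsub x hdx1.le hdx2.le
    have h1 : dist x c3 ^ 2 ≤ ρ3^2 := by
      have := pow_le_pow_left₀ dist_nonneg h0 2
      simpa using this
    rwa [hdx3] at h1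
  -- the two antipodal points
  obtain ⟨z1, hz1⟩ : ∃ z : ℂ, z = c1 + ((ρ1/e : ℝ):ℂ)*(c1 - c3) := ⟨_, rfl⟩
  have habs13 : ‖c1 - c3‖ = e := by
    rw [← neg_sub, norm_neg, habs31]
  have hdz11 : dist z1 c1 = ρ1 := by
    have h0 : z1 - c1 = ((ρ1/e : ℝ):ℂ)*(c1 - c3) := by rw [hz1]; ring
    rw [Complex.dist_eq, h0, norm_mul, Complex.norm_real, Real.norm_eq_abs, habs13,
      abs_of_pos (div_pos hρ1 he0), div_mul_cancel₀ _ he0.ne']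
  have hdz13 : dist z1 c3 = e + ρ1 := by
    have h0 : z1 - c3 = ((1 + ρ1/e : ℝ):ℂ)*(c1 - c3) := by
      rw [hz1]; push_cast; ring
    rw [Complex.dist_eq, h0, norm_mul, Complex.norm_real, Real.norm_eq_abs, habs13,
      abs_of_pos (by positivity : (0:ℝ) < 1 + ρ1/e)]
    field_simp
  have hz1out : ¬ dist z1 c3 ≤ ρ3 := by rw [hdz13]; linarith
  have hz1c2 : ρ2 < dist z1 c2 := by
    by_contra h
    push_neg at h
    exact hz1out (hsub z1 hdz11.le h)
  have hz12sq : dist z1 c2 ^ 2 = d^2 + ρ1^2 + 2*d*ρ1*a/e := by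
    have h0 : z1 - c2 = -(w*((d:ℂ) + ((ρ1/e : ℝ):ℂ)*ζ)) := by
      rw [hz1]
      linear_combination hwd + ((ρ1/e : ℝ):ℂ)*hwζ
    rw [Complex.dist_eq, h0, norm_neg, norm_mul, habsw, one_mul, abs_sq_eq',
      Complex.add_re, Complex.add_im, Complex.ofReal_re, Complex.ofReal_im,
      Complex.re_ofReal_mul, Complex.im_ofReal_mul, hζre]
    have hβe : ζ.im^2 = e^2 - a^2 := by rw [hζim2]; exact hβ2
    field_simp
    linear_combination (ρ1^2) * hβe
  have C4 : 0 < e*p + ρ1*a := by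
    have h1 : ρ2^2 < d^2 + ρ1^2 + 2*d*ρ1*a/e := by
      rw [← hz12sq]
      have := pow_lt_pow_left₀ hz1c2 hρ2.le (by norm_num : (2:ℕ) ≠ 0)
      simpa using this
    have h2 : (ρ2^2 - d^2 - ρ1^2)*e < 2*d*ρ1*a :=
      (lt_div_iff₀ he0).mp (by linarith only [h1])
    have hp2e : (2*d*p)*e = (d^2 + ρ1^2 - ρ2^2)*e := by rw [hp2]
    have h3 : 0 < 2*d*(e*p + ρ1*a) := by linarith only [hp2e, h2]
    by_contra hcon
    push_neg at hcon
    have h5 := mul_nonpos_of_nonneg_of_nonpos (by positivity : (0:ℝ) ≤ 2*d) hcon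
    linarith only [h3, h5]
  obtain ⟨z2, hz2⟩ : ∃ z : ℂ, z = c2 + ((ρ2/f : ℝ):ℂ)*(c2 - c3) := ⟨_, rfl⟩
  have habs23 : ‖c2 - c3‖ = f := by
    rw [← neg_sub, norm_neg, habs32]
  have hdz22 : dist z2 c2 = ρ2 := by
    have h0 : z2 - c2 = ((ρ2/f : ℝ):ℂ)*(c2 - c3) := by rw [hz2]; ring
    rw [Complex.dist_eq, h0, norm_mul, Complex.norm_real, Real.norm_eq_abs, habs23,
      abs_of_pos (div_pos hρ2 hf0), div_mul_cancel₀ _ hf0.ne']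
  have hdz23 : dist z2 c3 = f + ρ2 := by
    have h0 : z2 - c3 = ((1 + ρ2/f : ℝ):ℂ)*(c2 - c3) := by
      rw [hz2]; push_cast; ring
    rw [Complex.dist_eq, h0, norm_mul, Complex.norm_real, Real.norm_eq_abs, habs23,
      abs_of_pos (by positivity : (0:ℝ) < 1 + ρ2/f)]
    field_simp
  have hz2out : ¬ dist z2 c3 ≤ ρ3 := by rw [hdz23]; linarith
  have hz2c1 : ρ1 < dist z2 c1 := by
    by_contra h
    push_neg at h
    exact hz2out (hsub z2 h hdz22.le)
  have hc23w : c2 - c3 = w * ((d:ℂ) - ζ) := by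
    rw [mul_sub, hwd, hwζ]; ring
  have hz21sq : dist z2 c1 ^ 2 = d^2 + ρ2^2 + 2*d*ρ2*(d-a)/f := by
    have h0 : z2 - c1 = w*((d:ℂ) + ((ρ2/f : ℝ):ℂ)*((d:ℂ) - ζ)) := by
      rw [hz2]
      linear_combination (-1 : ℂ)*hwd + (((ρ2/f : ℝ)):ℂ)*hc23w
    rw [Complex.dist_eq, h0, norm_mul, habsw, one_mul, abs_sq_eq',
      Complex.add_re, Complex.add_im, Complex.ofReal_re, Complex.ofReal_im,
      Complex.re_ofReal_mul, Complex.im_ofReal_mul, Complex.sub_re, Complex.sub_im,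
      Complex.ofReal_re, Complex.ofReal_im, hζre]
    have hβf : ζ.im^2 = f^2 - (d-a)^2 := by rw [hζim2]; linarith [hf2c]
    field_simp
    linear_combination (ρ2^2) * hβf
  have C5 : 0 < f*(d-p) + ρ2*(d-a) := by
    have h1 : ρ1^2 < d^2 + ρ2^2 + 2*d*ρ2*(d-a)/f := by
      rw [← hz21sq]
      have := pow_lt_pow_left₀ hz2c1 hρ1.le (by norm_num : (2:ℕ) ≠ 0)
      simpa using this
    have h2 : (ρ1^2 - d^2 - ρ2^2)*f < 2*d*ρ2*(d-a) :=
      (lt_div_iff₀ hf0).mp (by linarith only [h1])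
    have hp2f : (2*d*p)*f = (d^2 + ρ1^2 - ρ2^2)*f := by rw [hp2]
    have h3 : 0 < 2*d*(f*(d-p) + ρ2*(d-a)) := by linarith only [hp2f, h2]
    by_contra hcon
    push_neg at hcon
    have h5 := mul_nonpos_of_nonneg_of_nonpos (by positivity : (0:ℝ) ≤ 2*d) hcon
    linarith only [h3, h5]
  have hci' : 2*ρ2*ρ3*ci = f^2 - ρ2^2 - ρ3^2 := by linarith
  have hcj' : 2*ρ1*ρ3*cj = e^2 - ρ1^2 - ρ3^2 := by linarith
  have hck' : 2*ρ1*ρ2*ck = d^2 - ρ1^2 - ρ2^2 := by linarith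
  exact core_scalar d p q a β ρ1 ρ2 ρ3 e f ci cj ck hd0 hρ1 hρ2 hρ3 he0 hf0
    hq0 hβ0 hρ12 hρ22 he2c hf2c hq2 hβ2 hci' hcj' hck' hjj hii C3 C4 C5

/-- Lemma 2.7: if, in the hyperbolic plane (upper half-plane model), three mutually
intersecting closed disks have pairwise exterior intersection angles
`Θi` (between `D_j` and `D_k`), `Θj` (between `D_k` and `D_i`), `Θk` (between `D_i` and `D_j`),
encoded via the hyperbolic cosine law for intersecting circles, and `D_i ∩ D_j ⊆ D_k`,
then `Θi + Θj ≥ Θk + π`. -/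
theorem exterior_angle_ineq_of_subset
    (pi pj pk : UpperHalfPlane) (ri rj rk : ℝ)
    (hri : 0 < ri) (hrj : 0 < rj) (hrk : 0 < rk)
    (Θi Θj Θk : ℝ)
    (hΘi : Θi ∈ Set.Ico 0 π) (hΘj : Θj ∈ Set.Ico 0 π) (hΘk : Θk ∈ Set.Ico 0 π)
    (hdi : Real.cosh (dist pj pk) = Real.cosh rj * Real.cosh rk + Real.cos Θi * Real.sinh rj * Real.sinh rk)
    (hdj : Real.cosh (dist pk pi) = Real.cosh rk * Real.cosh ri + Real.cos Θj * Real.sinh rk * Real.sinh ri)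
    (hdk : Real.cosh (dist pi pj) = Real.cosh ri * Real.cosh rj + Real.cos Θk * Real.sinh ri * Real.sinh rj)
    (hij : (closedBall pi ri ∩ closedBall pj rj).Nonempty)
    (hjk : (closedBall pj rj ∩ closedBall pk rk).Nonempty)
    (hki : (closedBall pk rk ∩ closedBall pi ri).Nonempty)
    (hsub : closedBall pi ri ∩ closedBall pj rj ⊆ closedBall pk rk) :
    Θi + Θj ≥ Θk + π := by
  have him1 : 0 < pi.im := pi.im_pos
  have him2 : 0 < pj.im := pj.im_pos
  have him3 : 0 < pk.im := pk.im_pos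
  have hρ1 : 0 < pi.im * Real.sinh ri := mul_pos him1 (Real.sinh_pos_iff.mpr hri)
  have hρ2 : 0 < pj.im * Real.sinh rj := mul_pos him2 (Real.sinh_pos_iff.mpr hrj)
  have hρ3 : 0 < pk.im * Real.sinh rk := mul_pos him3 (Real.sinh_pos_iff.mpr hrk)
  -- Euclidean centers
  obtain ⟨c1, hc1⟩ : ∃ z : ℂ, z = ((pi.center ri : UpperHalfPlane) : ℂ) := ⟨_, rfl⟩
  obtain ⟨c2, hc2⟩ : ∃ z : ℂ, z = ((pj.center rj : UpperHalfPlane) : ℂ) := ⟨_, rfl⟩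
  obtain ⟨c3, hc3⟩ : ∃ z : ℂ, z = ((pk.center rk : UpperHalfPlane) : ℂ) := ⟨_, rfl⟩
  have hc1re : c1.re = pi.re := by rw [hc1, UpperHalfPlane.coe_re, UpperHalfPlane.center_re]
  have hc1im : c1.im = pi.im * Real.cosh ri := by
    rw [hc1, UpperHalfPlane.coe_im, UpperHalfPlane.center_im]
  have hc2re : c2.re = pj.re := by rw [hc2, UpperHalfPlane.coe_re, UpperHalfPlane.center_re]
  have hc2im : c2.im = pj.im * Real.cosh rj := by
    rw [hc2, UpperHalfPlane.coe_im, UpperHalfPlane.center_im]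
  have hc3re : c3.re = pk.re := by rw [hc3, UpperHalfPlane.coe_re, UpperHalfPlane.center_re]
  have hc3im : c3.im = pk.im * Real.cosh rk := by
    rw [hc3, UpperHalfPlane.coe_im, UpperHalfPlane.center_im]
  -- squared Euclidean distances between the centers
  have key12 : dist c1 c2 ^ 2 = (pi.im*Real.sinh ri)^2 + (pj.im*Real.sinh rj)^2
      + 2*(Real.cos Θk)*(pi.im*Real.sinh ri)*(pj.im*Real.sinh rj) := by
    have h0 := UpperHalfPlane.cosh_dist' pi pj
    rw [hdk, eq_div_iff (by positivity : 2*pi.im*pj.im ≠ 0)] at h0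
    rw [cdist_sq', hc1re, hc1im, hc2re, hc2im]
    linear_combination -h0 + pi.im^2*(Real.cosh_sq ri) + pj.im^2*(Real.cosh_sq rj)
  have key13 : dist c1 c3 ^ 2 = (pi.im*Real.sinh ri)^2 + (pk.im*Real.sinh rk)^2
      + 2*(Real.cos Θj)*(pi.im*Real.sinh ri)*(pk.im*Real.sinh rk) := by
    have h0 := UpperHalfPlane.cosh_dist' pk pi
    rw [hdj, eq_div_iff (by positivity : 2*pk.im*pi.im ≠ 0)] at h0
    rw [cdist_sq', hc1re, hc1im, hc3re, hc3im]
    linear_combination -h0 + pi.im^2*(Real.cosh_sq ri) + pk.im^2*(Real.cosh_sq rk)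
  have key23 : dist c2 c3 ^ 2 = (pj.im*Real.sinh rj)^2 + (pk.im*Real.sinh rk)^2
      + 2*(Real.cos Θi)*(pj.im*Real.sinh rj)*(pk.im*Real.sinh rk) := by
    have h0 := UpperHalfPlane.cosh_dist' pj pk
    rw [hdi, eq_div_iff (by positivity : 2*pj.im*pk.im ≠ 0)] at h0
    rw [cdist_sq', hc2re, hc2im, hc3re, hc3im]
    linear_combination -h0 + pj.im^2*(Real.cosh_sq rj) + pk.im^2*(Real.cosh_sq rk)
  -- subset condition, Euclidean version
  have hsubE : ∀ z : ℂ, dist z c1 ≤ pi.im * Real.sinh ri →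
      dist z c2 ≤ pj.im * Real.sinh rj → dist z c3 ≤ pk.im * Real.sinh rk := by
    intro z h1 h2
    rw [hc1] at h1
    rw [hc2] at h2
    rw [hc3]
    have him : 0 < z.im := UpperHalfPlane.im_pos_of_dist_center_le h1
    have hz1 : dist (UpperHalfPlane.mk z him) pi ≤ ri :=
      UpperHalfPlane.dist_le_iff_dist_coe_center_le.mpr h1
    have hz2 : dist (UpperHalfPlane.mk z him) pj ≤ rj :=
      UpperHalfPlane.dist_le_iff_dist_coe_center_le.mpr h2
    have hz3 : (UpperHalfPlane.mk z him) ∈ closedBall pk rk :=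
      hsub ⟨Metric.mem_closedBall.mpr hz1, Metric.mem_closedBall.mpr hz2⟩
    exact UpperHalfPlane.dist_le_iff_dist_coe_center_le.mp (Metric.mem_closedBall.mp hz3)
  -- cosine ranges
  have hci1 : -1 < Real.cos Θi := by
    have := Real.cos_lt_cos_of_nonneg_of_le_pi hΘi.1 le_rfl hΘi.2
    rwa [Real.cos_pi] at this
  have hcj1 : -1 < Real.cos Θj := by
    have := Real.cos_lt_cos_of_nonneg_of_le_pi hΘj.1 le_rfl hΘj.2
    rwa [Real.cos_pi] at this
  have hck1 : -1 < Real.cos Θk := by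
    have := Real.cos_lt_cos_of_nonneg_of_le_pi hΘk.1 le_rfl hΘk.2
    rwa [Real.cos_pi] at this
  obtain ⟨W1, W2, GB⟩ := euclid_main c1 c2 c3 _ _ _ _ _ _ hρ1 hρ2 hρ3
    hci1 hcj1 hck1 (Real.cos_le_one Θk) key12 key13 key23 hsubE
  exact angle_final' Θi Θj Θk hΘi hΘj hΘk W1 W2 GB
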